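/- Let p_n, p_{n−1} be monic real polynomials of degrees n, n−1 with all roots real, with no common roots, whose roots interlace (between any two consecutive roots of p_n there is exactly one root of p_{n−1}). If λ_1 < ⋯ < λ_s are the roots of p_n exceeding 2 and λ'_1 < ⋯ < λ'_t those of p_{n−1} exceeding 2, then t ∈ {s−1, s} and λ_i ≤ λ'_i ≤ λ_{i+1} up to the appropriate offset; consequently ∏_{j=1}^{t} φ(λ'_j) ≤ ∏_{i=1}^{s} φ(λ_i) for any increasing function φ ≥ 1 on (2,∞), with equality only if s = 0. -/

import Mathlib

open Polynomial

private lemma one_le_prod_aux {s : Finset ℕ} {f : ℕ → ℝ} (h : ∀ i ∈ s, 1 ≤ f i) :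
    1 ≤ ∏ i ∈ s, f i := by
  calc (1:ℝ) = ∏ _i ∈ s, (1:ℝ) := by simp
  _ ≤ ∏ i ∈ s, f i := Finset.prod_le_prod (by intro i _; norm_num) h

/-- Interlacing and monotone products: let `p, q` be monic real polynomials of
degrees `n`, `n−1` whose roots `a 0 < ⋯ < a (n−1)` and `b 0 < ⋯ < b (n−2)` are
all real, share no common root, and strictly interlace
(`a j < b j < a (j+1)`). If `S` indexes the roots of `p` exceeding `2` and `T`
those of `q` exceeding `2`, then `#T ∈ {#S − 1, #S}` and for every increasing
function `φ ≥ 1` on `(2, ∞)` one has `∏_{j ∈ T} φ(b j) ≤ ∏_{i ∈ S} φ(a i)`,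
with equality only if `S = ∅`. -/
theorem interlacing_prod_le (n : ℕ) (hn : 1 ≤ n) (a b : ℕ → ℝ)
    (p q : Polynomial ℝ)
    (hp : p = ∏ i ∈ Finset.range n, (Polynomial.X - Polynomial.C (a i)))
    (hq : q = ∏ j ∈ Finset.range (n - 1), (Polynomial.X - Polynomial.C (b j)))
    (ha : ∀ i, i + 1 < n → a i < a (i + 1))
    (hinter : ∀ j, j < n - 1 → a j < b j ∧ b j < a (j + 1)) :
    (((Finset.range (n - 1)).filter (fun j => 2 < b j)).card =
        ((Finset.range n).filter (fun i => 2 < a i)).card ∨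
      ((Finset.range (n - 1)).filter (fun j => 2 < b j)).card + 1 =
        ((Finset.range n).filter (fun i => 2 < a i)).card) ∧
    ∀ φ : ℝ → ℝ, StrictMonoOn φ (Set.Ioi (2 : ℝ)) → (∀ x, 2 < x → 1 ≤ φ x) →
      (∏ j ∈ (Finset.range (n - 1)).filter (fun j => 2 < b j), φ (b j)) ≤
        (∏ i ∈ (Finset.range n).filter (fun i => 2 < a i), φ (a i)) ∧
      ((∏ j ∈ (Finset.range (n - 1)).filter (fun j => 2 < b j), φ (b j)) =
          (∏ i ∈ (Finset.range n).filter (fun i => 2 < a i), φ (a i)) →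
        (Finset.range n).filter (fun i => 2 < a i) = ∅) := by
  classical
  set S := (Finset.range n).filter (fun i => 2 < a i) with hSdef
  set T := (Finset.range (n - 1)).filter (fun j => 2 < b j) with hTdef
  -- monotonicity of a on range n
  have amono : ∀ i j, i ≤ j → j < n → a i ≤ a j := by
    intro i j hij hj
    induction j with
    | zero => interval_cases i; exact le_refl _
    | succ m ih =>
      rcases Nat.eq_or_lt_of_le hij with h | h
      · rw [h]
      · exact (ih (Nat.lt_succ_iff.mp h) (by omega)).trans (ha m hj).le
  -- membership facts
  have hmemS : ∀ i, i ∈ S ↔ i < n ∧ 2 < a i := by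
    intro i; simp [hSdef, Finset.mem_filter, Finset.mem_range]
  have hmemT : ∀ j, j ∈ T ↔ j < n - 1 ∧ 2 < b j := by
    intro j; simp [hTdef, Finset.mem_filter, Finset.mem_range]
  have hmapT : ∀ j ∈ T, j + 1 ∈ S := by
    intro j hj
    rw [hmemT] at hj
    rw [hmemS]
    exact ⟨by omega, lt_trans hj.2 (hinter j hj.1).2⟩
  have hinj : Set.InjOn (· + 1) T := fun x _ y _ h => by simpa using h
  have himg : T.image (· + 1) ⊆ S := by
    intro i hi
    obtain ⟨j, hj, rfl⟩ := Finset.mem_image.mp hi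
    exact hmapT j hj
  have hTS : T.card ≤ S.card := Finset.card_le_card_of_injOn _ hmapT hinj
  constructor
  · -- cardinality claim
    by_cases hS : S.Nonempty
    · set k := S.min' hS with hk
      have hkS : k ∈ S := S.min'_mem hS
      have hkn : k < n ∧ 2 < a k := (hmemS k).mp hkS
      have hST : S.card ≤ T.card + 1 := by
        have : (S.erase k).card ≤ T.card := by
          apply Finset.card_le_card_of_injOn (· - 1)
          · intro i hi
            have hik : i ≠ k := (Finset.mem_erase.mp hi).1
            have hiS := (hmemS i).mp (Finset.mem_erase.mp hi).2
            have hki : k < i := lt_of_le_of_ne (S.min'_le i (Finset.mem_erase.mp hi).2) (Ne.symm hik)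
            have h1 : i - 1 < n - 1 := by omega
            have h2 : 2 < a (i - 1) := lt_of_lt_of_le hkn.2 (amono k (i - 1) (by omega) (by omega))
            show i - 1 ∈ T
            rw [hmemT]
            exact ⟨h1, lt_trans h2 (hinter (i - 1) h1).1⟩
          · intro x hx y hy hxy
            have hx1 : k < x := lt_of_le_of_ne (S.min'_le x (Finset.mem_erase.mp hx).2)
              (Ne.symm (Finset.mem_erase.mp hx).1)
            have hy1 : k < y := lt_of_le_of_ne (S.min'_le y (Finset.mem_erase.mp hy).2)
              (Ne.symm (Finset.mem_erase.mp hy).1)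
            have hxy' : x - 1 = y - 1 := hxy
            omega
        have hc : (S.erase k).card = S.card - 1 := Finset.card_erase_of_mem hkS
        have hpos : 1 ≤ S.card := Finset.card_pos.mpr hS
        omega
      omega
    · have hSe : S.card = 0 := by
        rw [Finset.card_eq_zero]; exact Finset.not_nonempty_iff_eq_empty.mp hS
      have hTe : T.card = 0 := by omega
      left; omega
  · intro φ hmono hge
    -- φ > 1 strictly above 2
    have hgt : ∀ x : ℝ, 2 < x → 1 < φ x := by
      intro x hx
      have hm : (2:ℝ) < (2 + x) / 2 := by linarith
      have hm2 : (2 + x) / 2 < x := by linarith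
      calc (1:ℝ) ≤ φ ((2 + x) / 2) := hge _ hm
        _ < φ x := hmono (Set.mem_Ioi.mpr hm) (Set.mem_Ioi.mpr hx) hm2
    -- each factor bounds
    have hbfacts : ∀ j ∈ T, 2 < b j ∧ b j < a (j + 1) := by
      intro j hj
      have := (hmemT j).mp hj
      exact ⟨this.2, (hinter j this.1).2⟩
    have hstep : ∀ j ∈ T, φ (b j) < φ (a (j + 1)) := by
      intro j hj
      obtain ⟨h1, h2⟩ := hbfacts j hj
      exact hmono (Set.mem_Ioi.mpr h1) (Set.mem_Ioi.mpr (lt_trans h1 h2)) h2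
    have hbpos : ∀ j ∈ T, (0:ℝ) < φ (b j) := fun j hj =>
      lt_of_lt_of_le one_pos (hge _ (hbfacts j hj).1)
    have hSfact : ∀ i ∈ S, 1 < φ (a i) := fun i hi => hgt _ ((hmemS i).mp hi).2
    -- the middle product
    have hmid : (∏ j ∈ T, φ (a (j + 1))) = ∏ i ∈ T.image (· + 1), φ (a i) := by
      rw [Finset.prod_image (fun x hx y hy h => hinj hx hy h)]
    have himg_le : (∏ i ∈ T.image (· + 1), φ (a i)) ≤ ∏ i ∈ S, φ (a i) := by
      rw [← Finset.prod_sdiff himg]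
      refine le_mul_of_one_le_left ?_ ?_
      · apply Finset.prod_nonneg
        intro i hi
        exact le_trans zero_le_one (hSfact i (himg hi)).le
      · apply one_le_prod_aux
        intro i hi
        exact (hSfact i (Finset.mem_sdiff.mp hi).1).le
    have hle1 : (∏ j ∈ T, φ (b j)) ≤ ∏ j ∈ T, φ (a (j + 1)) :=
      Finset.prod_le_prod (fun j hj => (hbpos j hj).le) (fun j hj => (hstep j hj).le)
    have hmain : (∏ j ∈ T, φ (b j)) ≤ ∏ i ∈ S, φ (a i) :=
      hle1.trans (hmid ▸ himg_le)
    refine ⟨hmain, ?_⟩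
    intro heq
    by_contra hne
    have hS : S.Nonempty := Finset.nonempty_iff_ne_empty.mpr hne
    rcases Finset.eq_empty_or_nonempty T with hTe | hTne
    · -- T empty: LHS = 1 < RHS
      obtain ⟨k, hkS⟩ := hS
      have h1 : (1:ℝ) < ∏ i ∈ S, φ (a i) := by
        rw [← Finset.mul_prod_erase S _ hkS]
        have h2 : (1:ℝ) < φ (a k) := hSfact k hkS
        have h3 : (1:ℝ) ≤ ∏ i ∈ S.erase k, φ (a i) :=
          one_le_prod_aux (fun i hi => (hSfact i (Finset.mem_of_mem_erase hi)).le)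
        calc (1:ℝ) < φ (a k) := h2
          _ ≤ φ (a k) * ∏ i ∈ S.erase k, φ (a i) :=
            le_mul_of_one_le_right (by linarith) h3
      rw [hTe] at heq
      simp at heq
      linarith
    · -- T nonempty: strict inequality
      have hstrict : (∏ j ∈ T, φ (b j)) < ∏ j ∈ T, φ (a (j + 1)) :=
        Finset.prod_lt_prod_of_nonempty hbpos hstep hTne
      have : (∏ j ∈ T, φ (b j)) < ∏ i ∈ S, φ (a i) :=
        lt_of_lt_of_le hstrict (hmid ▸ himg_le)
      linarith [heq ▸ this]
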